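/- arXiv:0707.0771 — 2 statements merged into one kernel-verified Lean document; each statement's English description precedes it below -/
import Mathlib

section
/- Let u(z) = z²·log(|z|²) for z ≠ 0 and u(0) = 0, viewed as a function on the unit disc in ℂ. Then the Wirtinger derivative ∂u/∂z̄ equals z²/z̄ (for z ≠ 0, extended by 0 at 0), which is Lipschitz continuous on the unit disc, whereas ∂u/∂z = 2z·log(|z|²) + z is not Lipschitz continuous in any neighborhood of 0. -/
open Complex Metric

/-- `u z = z² log(|z|²)` for `z ≠ 0`, `u 0 = 0`. -/
noncomputable def optRegExample (z : ℂ) : ℂ :=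
  if z = 0 then 0 else z ^ 2 * (Real.log (‖z‖ ^ 2) : ℂ)

/-- The `∂̄`-derivative `z²/z̄` of `optRegExample`, extended by `0` at `0`. -/
noncomputable def optRegDbar (z : ℂ) : ℂ :=
  if z = 0 then 0 else z ^ 2 / (starRingEnd ℂ z)

/-- The `∂`-derivative `2z log(|z|²) + z` of `optRegExample`. -/
noncomputable def optRegD (z : ℂ) : ℂ :=
  if z = 0 then 0 else 2 * z * (Real.log (‖z‖ ^ 2) : ℂ) + z

lemma optReg_key_deriv {z : ℂ} (hz : z ≠ 0) :
    HasFDerivAt optRegExample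
      ((z ^ 2) • (Complex.ofRealCLM.comp ((‖z‖ ^ 2)⁻¹ • (2 • (innerSL ℝ z)))) +
        ((Real.log (‖z‖ ^ 2) : ℂ)) • ((ContinuousLinearMap.smulRight (1 : ℂ →L[ℂ] ℂ) (2 * z)).restrictScalars ℝ)) z := by
  have hpos : (0:ℝ) < ‖z‖ ^ 2 := by have := norm_pos_iff.2 hz; positivity
  have hq : HasFDerivAt (fun w : ℂ => ‖w‖ ^ 2) (2 • (innerSL ℝ z)) z :=
    (hasStrictFDerivAt_norm_sq z).hasFDerivAt
  have hlog : HasFDerivAt (fun w : ℂ => Real.log (‖w‖ ^ 2))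
      ((‖z‖ ^ 2)⁻¹ • (2 • (innerSL ℝ z))) z := by
    have := (Real.hasDerivAt_log hpos.ne').comp_hasFDerivAt z hq; exact this
  have hlogC : HasFDerivAt (fun w : ℂ => ((Real.log (‖w‖ ^ 2) : ℝ) : ℂ))
      (Complex.ofRealCLM.comp ((‖z‖ ^ 2)⁻¹ • (2 • (innerSL ℝ z)))) z :=
    Complex.ofRealCLM.hasFDerivAt.comp z hlog
  have hsq : HasFDerivAt (fun w : ℂ => w ^ 2)
      ((ContinuousLinearMap.smulRight (1 : ℂ →L[ℂ] ℂ) (2 * z)).restrictScalars ℝ) z := by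
    have := (hasDerivAt_pow 2 z).hasFDerivAt
    have h2 := this.restrictScalars ℝ
    simp only [Nat.cast_ofNat, pow_one, show 2 - 1 = 1 from rfl] at h2
    exact h2
  have hu := hsq.mul hlogC
  have hev : (fun w : ℂ => w ^ 2 * ((Real.log (‖w‖ ^ 2) : ℝ) : ℂ)) =ᶠ[nhds z] optRegExample := by
    filter_upwards [eventually_ne_nhds hz] with w hw
    simp [optRegExample, hw]
  exact (hu.congr_of_eventuallyEq hev.symm)

lemma optReg_wirt1 {z : ℂ} (hz : z ≠ 0) :
    (1 / 2 : ℂ) * (fderiv ℝ optRegExample z 1 + Complex.I * fderiv ℝ optRegExample z Complex.I)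
      = z ^ 2 / (starRingEnd ℂ z) := by
  rw [(optReg_key_deriv hz).fderiv]
  simp only [ContinuousLinearMap.add_apply, ContinuousLinearMap.coe_smul',
    Pi.smul_apply, ContinuousLinearMap.coe_comp', Function.comp_apply,
    ContinuousLinearMap.coe_restrictScalars', ContinuousLinearMap.smulRight_apply,
    ContinuousLinearMap.one_apply, innerSL_apply_apply, Complex.inner,
    Complex.ofRealCLM_apply, smul_eq_mul]
  have h1 : ((1:ℂ) * (starRingEnd ℂ) z).re = z.re := by simp
  have h2 : (Complex.I * (starRingEnd ℂ) z).re = z.im := by simp [Complex.mul_re]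
  rw [h1, h2]
  have hn : ((‖z‖ ^ 2 : ℝ) : ℂ) = z * (starRingEnd ℂ) z := by
    rw [Complex.mul_conj]; norm_cast; simp [Complex.sq_norm]
  have hre : (z.re : ℂ) = (z + (starRingEnd ℂ) z) / 2 := by
    rw [Complex.add_conj]; push_cast; ring
  have him : (z.im : ℂ) = (z - (starRingEnd ℂ) z) / (2 * Complex.I) := by
    rw [Complex.sub_conj]
    field_simp [Complex.I_ne_zero]
    ring_nf
    push_cast; ring
  have hcz : (starRingEnd ℂ) z ≠ 0 := by simpa using hz
  have hn' : ((‖z‖:ℂ) ^ 2) = z * (starRingEnd ℂ) z := by push_cast at hn; exact hn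
  push_cast [smul_eq_mul]
  rw [hn', hre, him]
  field_simp [Complex.I_ne_zero]
  rw [nsmul_eq_mul, nsmul_eq_mul]
  field_simp [Complex.I_ne_zero]
  linear_combination (4 * (starRingEnd ℂ) z * (Real.log (‖z‖ ^ 2) : ℂ)) * Complex.I_sq

lemma optReg_wirt2 {z : ℂ} (hz : z ≠ 0) :
    (1 / 2 : ℂ) * (fderiv ℝ optRegExample z 1 - Complex.I * fderiv ℝ optRegExample z Complex.I)
      = 2 * z * (Real.log (‖z‖ ^ 2) : ℂ) + z := by
  rw [(optReg_key_deriv hz).fderiv]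
  simp only [ContinuousLinearMap.add_apply, ContinuousLinearMap.coe_smul',
    Pi.smul_apply, ContinuousLinearMap.coe_comp', Function.comp_apply,
    ContinuousLinearMap.coe_restrictScalars', ContinuousLinearMap.smulRight_apply,
    ContinuousLinearMap.one_apply, innerSL_apply_apply, Complex.inner,
    Complex.ofRealCLM_apply, smul_eq_mul]
  have h1 : ((1:ℂ) * (starRingEnd ℂ) z).re = z.re := by simp
  have h2 : (Complex.I * (starRingEnd ℂ) z).re = z.im := by simp [Complex.mul_re]
  rw [h1, h2]
  have hn : ((‖z‖ ^ 2 : ℝ) : ℂ) = z * (starRingEnd ℂ) z := by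
    rw [Complex.mul_conj]; norm_cast; simp [Complex.sq_norm]
  have hre : (z.re : ℂ) = (z + (starRingEnd ℂ) z) / 2 := by
    rw [Complex.add_conj]; push_cast; ring
  have him : (z.im : ℂ) = (z - (starRingEnd ℂ) z) / (2 * Complex.I) := by
    rw [Complex.sub_conj]
    field_simp [Complex.I_ne_zero]
    ring_nf
    push_cast; ring
  have hcz : (starRingEnd ℂ) z ≠ 0 := by simpa using hz
  have hn' : ((‖z‖:ℂ) ^ 2) = z * (starRingEnd ℂ) z := by push_cast at hn; exact hn
  push_cast [smul_eq_mul]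
  rw [hn', hre, him]
  field_simp [Complex.I_ne_zero]
  rw [nsmul_eq_mul, nsmul_eq_mul]
  field_simp [Complex.I_ne_zero]
  linear_combination (-4 * (starRingEnd ℂ) z * (Real.log (‖z‖ ^ 2) : ℂ)) * Complex.I_sq

lemma optReg_dbar_norm (z : ℂ) : ‖optRegDbar z‖ = ‖z‖ := by
  by_cases hz : z = 0
  · simp [optRegDbar, hz]
  · have : ‖z‖ ≠ 0 := by simpa using hz
    rw [optRegDbar, if_neg hz, norm_div, norm_pow, RCLike.norm_conj]
    field_simp [sq]

lemma optReg_dbar_half {z w : ℂ} (hz : z ≠ 0) (hw : w ≠ 0) (hle : ‖w‖ ≤ ‖z‖) :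
    ‖optRegDbar z - optRegDbar w‖ ≤ 3 * ‖z - w‖ := by
  have hcz : (starRingEnd ℂ) z ≠ 0 := by simpa using hz
  have hcw : (starRingEnd ℂ) w ≠ 0 := by simpa using hw
  have key : optRegDbar z - optRegDbar w =
      ((starRingEnd ℂ) w * z * (z - w) + w * (starRingEnd ℂ) w * (z - w)
        - w ^ 2 * ((starRingEnd ℂ) (z - w))) / ((starRingEnd ℂ) z * (starRingEnd ℂ) w) := by
    simp only [optRegDbar, if_neg hz, if_neg hw, map_sub]
    field_simp
    ring
  rw [key, norm_div, norm_mul, RCLike.norm_conj, RCLike.norm_conj]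
  have hzpos : (0:ℝ) < ‖z‖ := norm_pos_iff.2 hz
  have hwpos : (0:ℝ) < ‖w‖ := norm_pos_iff.2 hw
  rw [div_le_iff₀ (by positivity)]
  have hnum : ‖(starRingEnd ℂ) w * z * (z - w) + w * (starRingEnd ℂ) w * (z - w)
      - w ^ 2 * ((starRingEnd ℂ) (z - w))‖
      ≤ ‖w‖ * ‖z‖ * ‖z - w‖ + ‖w‖ * ‖w‖ * ‖z - w‖ + ‖w‖ ^ 2 * ‖z - w‖ := by
    refine le_trans (norm_sub_le _ _) ?_
    gcongr
    · refine le_trans (norm_add_le _ _) ?_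
      gcongr <;> simp [norm_mul, RCLike.norm_conj]
    · rw [norm_mul, norm_pow, RCLike.norm_conj]
  refine hnum.trans ?_
  have h1 : ‖w‖ * ‖w‖ * ‖z - w‖ ≤ ‖w‖ * ‖z‖ * ‖z - w‖ := by
    gcongr
  have h2 : ‖w‖ ^ 2 * ‖z - w‖ ≤ ‖w‖ * ‖z‖ * ‖z - w‖ := by
    rw [sq]; gcongr
  nlinarith [norm_nonneg (z - w)]

lemma optReg_dbar_lip (z w : ℂ) : ‖optRegDbar z - optRegDbar w‖ ≤ 3 * ‖z - w‖ := by
  by_cases hz : z = 0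
  · subst hz
    have h0 : optRegDbar 0 = 0 := by simp [optRegDbar]
    rw [h0, zero_sub, norm_neg, optReg_dbar_norm, zero_sub, norm_neg]
    nlinarith [norm_nonneg w]
  · by_cases hw : w = 0
    · subst hw
      have h0 : optRegDbar 0 = 0 := by simp [optRegDbar]
      rw [h0, sub_zero, optReg_dbar_norm, sub_zero]
      nlinarith [norm_nonneg z]
    · rcases le_total ‖w‖ ‖z‖ with h | h
      · exact optReg_dbar_half hz hw h
      · rw [norm_sub_rev, show ‖z - w‖ = ‖w - z‖ from (norm_sub_rev _ _)]
        exact optReg_dbar_half hw hz h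

lemma optReg_not_lip (δ : ℝ) (hδ : 0 < δ) :
    ¬ ∃ K : ℝ, ∀ z w : ℂ, ‖z‖ < δ → ‖w‖ < δ →
      ‖optRegD z - optRegD w‖ ≤ K * ‖z - w‖ := by
  rintro ⟨K, hK⟩
  set r : ℝ := min (δ / 2) (Real.exp (-(|K| + 2) / 4)) with hr_def
  have hr : 0 < r := lt_min (by linarith) (Real.exp_pos _)
  have hrδ : r < δ := lt_of_le_of_lt (min_le_left _ _) (by linarith)
  have hlog : Real.log r ≤ -(|K| + 2) / 4 := by
    calc Real.log r ≤ Real.log (Real.exp (-(|K| + 2) / 4)) :=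
          Real.log_le_log hr (min_le_right _ _)
    _ = -(|K| + 2) / 4 := Real.log_exp _
  have hz0 : (r : ℂ) ≠ 0 := by exact_mod_cast hr.ne'
  have hnorm : ‖(r : ℂ)‖ = r := by rw [Complex.norm_real, Real.norm_of_nonneg hr.le]
  have hval : optRegD (r : ℂ) = ((r * (4 * Real.log r + 1) : ℝ) : ℂ) := by
    rw [optRegD, if_neg hz0, hnorm]
    have : Real.log (r ^ 2) = 2 * Real.log r := by
      rw [Real.log_pow]; push_cast; ring
    rw [this]
    push_cast
    ring
  have h := hK (r : ℂ) 0 (by rwa [hnorm]) (by simpa using hδ)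
  have h0 : optRegD 0 = 0 := by simp [optRegD]
  rw [h0, sub_zero, hval, sub_zero, hnorm, Complex.norm_real, Real.norm_eq_abs] at h
  have habs : -(r * (4 * Real.log r + 1)) ≤ |r * (4 * Real.log r + 1)| := neg_le_abs _
  have hKK : K ≤ |K| := le_abs_self K
  nlinarith [mul_le_mul_of_nonneg_left hlog (by positivity : (0:ℝ) ≤ 4 * r)]

/-- `∂u/∂z̄ = z²/z̄` is Lipschitz on the unit disc, `∂u/∂z = 2z log(|z|²)+z` is not
Lipschitz on any neighborhood of `0`. -/
theorem optRegExample_claims :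
    (∀ z ∈ ball (0 : ℂ) 1, z ≠ 0 → DifferentiableAt ℝ optRegExample z ∧
      (1 / 2 : ℂ) * (fderiv ℝ optRegExample z 1 + Complex.I * fderiv ℝ optRegExample z Complex.I)
        = optRegDbar z ∧
      (1 / 2 : ℂ) * (fderiv ℝ optRegExample z 1 - Complex.I * fderiv ℝ optRegExample z Complex.I)
        = optRegD z) ∧
    (∃ C : ℝ, ∀ z w : ℂ, z ∈ ball (0 : ℂ) 1 → w ∈ ball (0 : ℂ) 1 →
      ‖optRegDbar z - optRegDbar w‖ ≤ C * ‖z - w‖) ∧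
    (∀ δ : ℝ, 0 < δ → ¬ ∃ K : ℝ, ∀ z w : ℂ, ‖z‖ < δ → ‖w‖ < δ →
      ‖optRegD z - optRegD w‖ ≤ K * ‖z - w‖) := by
  refine ⟨fun z _ hz0 => ⟨(optReg_key_deriv hz0).differentiableAt, ?_, ?_⟩,
    ⟨3, fun z w _ _ => optReg_dbar_lip z w⟩, optReg_not_lip⟩
  · rw [optRegDbar, if_neg hz0]; exact optReg_wirt1 hz0
  · rw [optRegD, if_neg hz0]; exact optReg_wirt2 hz0
end

section
/- Let d ≥ 1, let η be a primitive d-th root of unity, and let m be a positive integer divisible by d. Suppose f is a ℂⁿ-valued function defined on a punctured neighborhood of 0 in ℂ such that f(ηz) − f(z) = w·z^m + o(|z|^m) as z → 0, for some vector w ∈ ℂⁿ. Then w = 0. -/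
open Filter Asymptotics

private lemma aux_smul_zero {n : ℕ} (m : ℕ) (v : Fin n → ℂ)
    (h : (fun z : ℂ => z ^ m • v) =o[nhdsWithin (0 : ℂ) {0}ᶜ] fun z : ℂ => ‖z‖ ^ m) :
    v = 0 := by
  by_contra hv
  have hv' : 0 < ‖v‖ := norm_pos_iff.mpr hv
  have h2 := h.def (show (0:ℝ) < ‖v‖ / 2 by positivity)
  have hne : ∀ᶠ z in nhdsWithin (0 : ℂ) {0}ᶜ, z ≠ 0 :=
    eventually_mem_nhdsWithin
  obtain ⟨z, hz1, hz2⟩ := (h2.and hne).exists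
  have hzpos : 0 < ‖z‖ ^ m := pow_pos (norm_pos_iff.mpr hz2) m
  have : ‖z‖ ^ m * ‖v‖ ≤ ‖v‖ / 2 * (‖z‖ ^ m) := by
    have := hz1
    rw [norm_smul] at this
    simpa [norm_pow, abs_of_nonneg (pow_nonneg (norm_nonneg z) m)] using this
  nlinarith

private lemma tendsto_mul_punctured (c : ℂ) (hc : c ≠ 0) :
    Filter.Tendsto (fun z : ℂ => c * z) (nhdsWithin (0 : ℂ) {0}ᶜ)
      (nhdsWithin (0 : ℂ) {0}ᶜ) := by
  rw [tendsto_nhdsWithin_iff]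
  constructor
  · have : Filter.Tendsto (fun z : ℂ => c * z) (nhds 0) (nhds (c * 0)) :=
      (continuous_const.mul continuous_id).tendsto 0
    simpa using this.mono_left nhdsWithin_le_nhds
  · filter_upwards [eventually_mem_nhdsWithin] with z hz
    simp only [Set.mem_compl_iff, Set.mem_singleton_iff] at hz ⊢
    exact mul_ne_zero hc hz

/-- Root-of-unity summation: if `η` is a primitive `d`-th root of unity, `d ∣ m`,
`m > 0`, and `f(ηz) − f(z) = w z^m + o(|z|^m)` as `z → 0` on a punctured
neighborhood, then `w = 0`. -/
theorem telescoping_root_of_unity {n : ℕ} (d : ℕ) (hd : 1 ≤ d) (η : ℂ)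
    (hη : η ^ d = 1) (hprim : ∀ k : ℕ, 0 < k → k < d → η ^ k ≠ 1)
    (m : ℕ) (hm : 0 < m) (hdvd : d ∣ m)
    (f : ℂ → Fin n → ℂ) (w : Fin n → ℂ)
    (hasymp : (fun z : ℂ => f (η * z) - f z - z ^ m • w)
      =o[nhdsWithin (0 : ℂ) {0}ᶜ] fun z : ℂ => ‖z‖ ^ m) :
    w = 0 := by
  have hη0 : η ≠ 0 := by
    intro h; rw [h, zero_pow (by omega : d ≠ 0)] at hη; exact one_ne_zero hη.symm
  have hηm : η ^ m = 1 := by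
    obtain ⟨k, rfl⟩ := hdvd
    rw [pow_mul, hη, one_pow]
  -- each shifted term is little-o
  have hterm : ∀ j : ℕ,
      (fun z : ℂ => f (η * (η ^ j * z)) - f (η ^ j * z) - (η ^ j * z) ^ m • w)
        =o[nhdsWithin (0 : ℂ) {0}ᶜ] fun z : ℂ => ‖z‖ ^ m := by
    intro j
    have htend := tendsto_mul_punctured (η ^ j) (pow_ne_zero j hη0)
    have h1 := hasymp.comp_tendsto htend
    have h2 : (fun z : ℂ => ‖η ^ j * z‖ ^ m)
        =O[nhdsWithin (0 : ℂ) {0}ᶜ] fun z : ℂ => ‖z‖ ^ m := by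
      apply IsBigO.of_bound (‖η ^ j‖ ^ m)
      filter_upwards with z
      simp [norm_mul, mul_pow, abs_of_nonneg, pow_nonneg, norm_nonneg,
        le_of_eq, mul_comm]
    exact h1.trans_isBigO h2
  -- sum over j < d
  have hsum := IsLittleO.sum (fun j (_ : j ∈ Finset.range d) => hterm j)
  have hkey : (fun z : ℂ => ∑ j ∈ Finset.range d,
      (f (η * (η ^ j * z)) - f (η ^ j * z) - (η ^ j * z) ^ m • w))
      = fun z : ℂ => z ^ m • (-(d : ℂ) • w) := by
    funext z
    have htel : ∑ j ∈ Finset.range d,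
        (f (η * (η ^ j * z)) - f (η ^ j * z)) = f (η ^ d * z) - f (η ^ 0 * z) := by
      have := Finset.sum_range_sub (fun j => f (η ^ j * z)) d
      simpa [pow_succ, mul_assoc, mul_comm, mul_left_comm] using this
    have hpow : ∀ j : ℕ, (η ^ j * z) ^ m = z ^ m := by
      intro j
      rw [mul_pow, ← pow_mul, mul_comm j m, pow_mul, hηm, one_pow, one_mul]
    calc ∑ j ∈ Finset.range d,
        (f (η * (η ^ j * z)) - f (η ^ j * z) - (η ^ j * z) ^ m • w)
        = (∑ j ∈ Finset.range d, (f (η * (η ^ j * z)) - f (η ^ j * z)))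
          - ∑ j ∈ Finset.range d, (η ^ j * z) ^ m • w := by
          rw [Finset.sum_sub_distrib]
      _ = 0 - (d : ℂ) • (z ^ m • w) := by
          rw [htel, hη, pow_zero]
          congr 1
          · simp
          · simp [hpow, Finset.sum_const, ← Nat.cast_smul_eq_nsmul ℂ]
      _ = z ^ m • (-(d : ℂ) • w) := by
          rw [zero_sub, smul_comm]
          simp [smul_smul]
  rw [Finset.sum_fn] at hsum
  rw [hkey] at hsum
  have hv := aux_smul_zero m (-(d : ℂ) • w) hsum
  have hd0 : (-(d : ℂ)) ≠ 0 := by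
    simp only [neg_ne_zero, Nat.cast_ne_zero]
    omega
  exact (smul_eq_zero.mp hv).resolve_left hd0
end
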